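/- Let W be a VLA-SS over ℂ and let W₁ ⊆ W be the linear span of the skew defect vectors vₙw + Σ_{k≥0} ((−1)^{n+k}/k!)·D^k(w_{n+k}v) over all v,w ∈ W and n ∈ ℕ. Then W₁ is a two-sided ideal invariant under D: D(W₁) ⊆ W₁, uₙa ∈ W₁ and aₙu ∈ W₁ for all u ∈ W, a ∈ W₁, n ∈ ℕ. Moreover the quotient W_ss = W/W₁, with the induced operator D and products, is a vertex Lie algebra, and every homomorphism from W to a vertex Lie algebra V vanishes on W₁, hence factors through W_ss. -/

import Mathlib

open scoped BigOperators

noncomputable section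

/-- A VLA-J-SS over `ℂ`. -/
structure VLAJSS (U : Type*) [AddCommGroup U] [Module ℂ U] where
  D : U →ₗ[ℂ] U
  mul : ℕ → U →ₗ[ℂ] U →ₗ[ℂ] U
  trunc : ∀ u v : U, ∃ N : ℕ, ∀ n : ℕ, N ≤ n → mul n u v = 0
  dLeft : ∀ (n : ℕ) (u v : U), mul (n + 1) (D u) v = (-((n : ℂ) + 1)) • mul n u v
  dLeftZero : ∀ u v : U, mul 0 (D u) v = 0
  leibniz : ∀ (n : ℕ) (u v : U), D (mul n u v) = mul n (D u) v + mul n u (D v)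

/-- A vertex Lie algebra over `ℂ`: a VLA-J-SS satisfying in addition the half skew
symmetry and the half Jacobi identity. -/
structure VertexLie (U : Type*) [AddCommGroup U] [Module ℂ U] extends VLAJSS U where
  skew : ∀ (n : ℕ) (u v : U),
    mul n u v =
      -∑ᶠ k : ℕ, (((-1 : ℂ) ^ (n + k)) / (Nat.factorial k : ℂ)) • ((D ^ k) (mul (n + k) v u))
  jacobi : ∀ (k m n : ℕ) (u v w : U),
    ∑ᶠ i : ℕ, ((-1 : ℂ) ^ i * (Nat.choose k i : ℂ)) •
        (mul (m + k - i) u (mul (n + i) v w)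
          - ((-1 : ℂ) ^ k) • mul (n + k - i) v (mul (m + i) u w))
      = ∑ᶠ i : ℕ, ((Nat.choose m i : ℂ)) • mul (m + n - i) (mul (k + i) u v) w

variable {U : Type*} [AddCommGroup U] [Module ℂ U]

/-- A VLA-SS over `ℂ`: a VLA-J-SS satisfying the half Jacobi identity. -/
structure VLASS (W : Type*) [AddCommGroup W] [Module ℂ W] extends VLAJSS W where
  jacobi : ∀ (k m n : ℕ) (u v w : W),
    ∑ᶠ i : ℕ, ((-1 : ℂ) ^ i * (Nat.choose k i : ℂ)) •
        (mul (m + k - i) u (mul (n + i) v w)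
          - ((-1 : ℂ) ^ k) • mul (n + k - i) v (mul (m + i) u w))
      = ∑ᶠ i : ℕ, ((Nat.choose m i : ℂ)) • mul (m + n - i) (mul (k + i) u v) w

/-- The set of skew defect vectors. -/
def SkewDefects (A : VLAJSS U) : Set U :=
  {x : U | ∃ (v w : U) (n : ℕ),
    x = A.mul n v w
      + ∑ᶠ k : ℕ, (((-1 : ℂ) ^ (n + k)) / (Nat.factorial k : ℂ)) •
          ((A.D ^ k) (A.mul (n + k) w v))}

section Helpers

variable {M : Type*} [AddCommMonoid M]

lemma finsum_eq_range (f : ℕ → M) (N : ℕ) (h : ∀ n, N ≤ n → f n = 0) :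
    ∑ᶠ n, f n = ∑ n ∈ Finset.range N, f n := by
  apply finsum_eq_sum_of_support_subset
  intro x hx
  simp only [Finset.coe_range, Set.mem_Iio]
  by_contra hc
  exact hx (h x (by omega))

lemma sum_shift (f : ℕ → M) (N j : ℕ) (h0 : ∀ k, k < j → f k = 0)
    (h1 : ∀ k, N ≤ k → f k = 0) :
    ∑ k ∈ Finset.range N, f k = ∑ l ∈ Finset.range N, f (l + j) := by
  have e1 : ∑ k ∈ Finset.range N, f k = ∑ k ∈ Finset.range (j + N), f k := by
    apply Finset.sum_subset
    · intro x hx; simp only [Finset.mem_range] at *; omega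
    · intro x _ hx; exact h1 x (by simp only [Finset.mem_range] at hx; omega)
  rw [e1, Finset.sum_range_add]
  have : ∑ x ∈ Finset.range j, f x = 0 :=
    Finset.sum_eq_zero (fun x hx => h0 x (Finset.mem_range.mp hx))
  rw [this, zero_add]
  exact Finset.sum_congr rfl (fun x _ => by rw [Nat.add_comm])

lemma nat_mul_descFactorial (m j : ℕ) :
    m * (m - 1).descFactorial j = m.descFactorial (j + 1) := by
  cases m with
  | zero =>
    rw [Nat.descFactorial_eq_zero_iff_lt.mpr (Nat.succ_pos j)]
    simp
  | succ m' => rw [Nat.succ_descFactorial_succ]; simp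

end Helpers
namespace VLAJSS

variable (A : VLAJSS U)

/-- The skew tail sum. -/
noncomputable def S (n : ℕ) (v w : U) : U :=
  ∑ᶠ k : ℕ, (((-1 : ℂ) ^ (n + k)) / (Nat.factorial k : ℂ)) •
      ((A.D ^ k) (A.mul (n + k) w v))

/-- The skew defect vector. -/
noncomputable def X (n : ℕ) (v w : U) : U := A.mul n v w + A.S n v w

lemma X_mem (n : ℕ) (v w : U) : A.X n v w ∈ SkewDefects A := ⟨v, w, n, rfl⟩

lemma skewDefects_eq (x : U) (hx : x ∈ SkewDefects A) :
    ∃ (v w : U) (n : ℕ), x = A.X n v w := hx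

lemma S_eq_range (n : ℕ) (v w : U) (N : ℕ) (hN : ∀ j, N ≤ j → A.mul j w v = 0) :
    A.S n v w = ∑ k ∈ Finset.range N,
      (((-1 : ℂ) ^ (n + k)) / (Nat.factorial k : ℂ)) • ((A.D ^ k) (A.mul (n + k) w v)) := by
  apply finsum_eq_range
  intro k hk
  rw [hN (n + k) (by omega)]
  simp

/-- `mul m (D u) v = -m • mul (m-1) u v` uniformly. -/
lemma mulD_left (m : ℕ) (u v : U) :
    A.mul m (A.D u) v = (-(m : ℂ)) • A.mul (m - 1) u v := by
  cases m with
  | zero => simp [A.dLeftZero]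
  | succ m' => rw [A.dLeft]; push_cast; simp

lemma mulD_right (m : ℕ) (u v : U) :
    A.mul m u (A.D v) = A.D (A.mul m u v) + (m : ℂ) • A.mul (m - 1) u v := by
  have := A.leibniz m u v
  rw [A.mulD_left] at this
  rw [this, neg_smul]
  abel

/-- L3: iterated `D` in the right argument. -/
lemma mul_pow_D (k : ℕ) (m : ℕ) (u b : U) :
    A.mul m u ((A.D ^ k) b)
      = ∑ j ∈ Finset.range (k + 1),
          ((Nat.choose k j : ℂ) * (Nat.descFactorial m j : ℂ)) •
            ((A.D ^ (k - j)) (A.mul (m - j) u b)) := by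
  induction k generalizing m b with
  | zero => simp
  | succ k ih =>
    have hD : (A.D ^ (k + 1)) b = (A.D ^ k) (A.D b) := by
      rw [pow_succ]; rfl
    rw [hD, ih]
    have step : ∀ j ∈ Finset.range (k + 1),
        ((Nat.choose k j : ℂ) * (Nat.descFactorial m j : ℂ)) •
            ((A.D ^ (k - j)) (A.mul (m - j) u (A.D b)))
          = ((Nat.choose k j : ℂ) * (Nat.descFactorial m j : ℂ)) •
              ((A.D ^ (k + 1 - j)) (A.mul (m - j) u b))
            + ((Nat.choose k j : ℂ) * (Nat.descFactorial m (j + 1) : ℂ)) •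
              ((A.D ^ (k - j)) (A.mul (m - (j + 1)) u b)) := by
      intro j hj
      rw [Finset.mem_range] at hj
      have h1 : (A.D ^ (k - j)) (A.D (A.mul (m - j) u b))
          = (A.D ^ (k + 1 - j)) (A.mul (m - j) u b) := by
        rw [show k + 1 - j = (k - j) + 1 by omega, pow_succ]; rfl
      have h2 : m - j - 1 = m - (j + 1) := by omega
      rw [A.mulD_right, map_add, smul_add, h1, map_smul, smul_smul, h2]
      congr 1
      congr 1
      rw [Nat.descFactorial_succ]
      push_cast
      ring
    rw [Finset.sum_congr rfl step, Finset.sum_add_distrib]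
    rw [Finset.sum_range_succ' (fun j => ((Nat.choose (k+1) j : ℂ) * (Nat.descFactorial m j : ℂ)) •
          ((A.D ^ (k + 1 - j)) (A.mul (m - j) u b))) (k+1)]
    rw [Finset.sum_range_succ' (fun j => ((Nat.choose k j : ℂ) * (Nat.descFactorial m j : ℂ)) •
          ((A.D ^ (k + 1 - j)) (A.mul (m - j) u b))) k]
    simp only [Nat.choose_zero_right, Nat.descFactorial_zero, Nat.cast_one, one_mul,
      Nat.sub_zero, Nat.succ_sub_succ_eq_sub]
    have ext1 : ∑ j ∈ Finset.range (k + 1),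
          ((Nat.choose k (j + 1) : ℂ) * (Nat.descFactorial m (j + 1) : ℂ)) •
            ((A.D ^ (k - j)) (A.mul (m - (j + 1)) u b))
        = ∑ j ∈ Finset.range k,
          ((Nat.choose k (j + 1) : ℂ) * (Nat.descFactorial m (j + 1) : ℂ)) •
            ((A.D ^ (k - j)) (A.mul (m - (j + 1)) u b)) := by
      rw [Finset.sum_range_succ, Nat.choose_succ_self]
      simp
    rw [← ext1]
    have ext2 : ∀ j ∈ Finset.range (k + 1),
        ((Nat.choose (k + 1) (j + 1) : ℂ) * (Nat.descFactorial m (j + 1) : ℂ)) •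
            ((A.D ^ (k - j)) (A.mul (m - (j + 1)) u b))
          = ((Nat.choose k j : ℂ) * (Nat.descFactorial m (j + 1) : ℂ)) •
              ((A.D ^ (k - j)) (A.mul (m - (j + 1)) u b))
            + ((Nat.choose k (j + 1) : ℂ) * (Nat.descFactorial m (j + 1) : ℂ)) •
              ((A.D ^ (k - j)) (A.mul (m - (j + 1)) u b)) := by
      intro j _
      rw [Nat.choose_succ_succ, ← add_smul]
      congr 1
      simp only [Nat.succ_eq_add_one]
      push_cast
      ring
    rw [Finset.sum_congr rfl ext2, Finset.sum_add_distrib]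
    abel

end VLAJSS
section Helpers2

lemma neg_one_pow_congr' {a b : ℕ} (h : a % 2 = b % 2) : ((-1 : ℂ)) ^ a = (-1) ^ b := by
  rcases Nat.even_or_odd a with ha | ha
  · rw [ha.neg_one_pow, (Nat.even_iff.mpr (by rw [← h]; exact Nat.even_iff.mp ha)).neg_one_pow]
  · rw [ha.neg_one_pow, (Nat.odd_iff.mpr (by rw [← h]; exact Nat.odd_iff.mp ha)).neg_one_pow]

end Helpers2

namespace VLAJSS

variable (A : VLAJSS U)

lemma X_D (n : ℕ) (v w : U) : A.D (A.X n v w) = A.X n (A.D v) w + A.X n v (A.D w) := by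
  obtain ⟨N₁, h₁⟩ := A.trunc w v
  obtain ⟨N₂, h₂⟩ := A.trunc (A.D w) v
  set N := max N₁ N₂ with hNdef
  have hwv : ∀ j, N ≤ j → A.mul j w v = 0 := fun j hj => h₁ j (by omega)
  have hDwv : ∀ j, N ≤ j → A.mul j (A.D w) v = 0 := fun j hj => h₂ j (by omega)
  have hwDv : ∀ j, N ≤ j → A.mul j w (A.D v) = 0 := by
    intro j hj
    have hl := A.leibniz j w v
    rw [hwv j hj, hDwv j hj, map_zero] at hl
    simpa using hl.symm
  unfold X
  rw [A.S_eq_range n v w N hwv, A.S_eq_range n (A.D v) w N hwDv,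
    A.S_eq_range n v (A.D w) N hDwv, map_add, map_sum, A.leibniz]
  have hsum : ∑ k ∈ Finset.range N,
        (((-1 : ℂ) ^ (n + k)) / (Nat.factorial k : ℂ)) • ((A.D ^ k) (A.mul (n + k) w (A.D v)))
      + ∑ k ∈ Finset.range N,
        (((-1 : ℂ) ^ (n + k)) / (Nat.factorial k : ℂ)) • ((A.D ^ k) (A.mul (n + k) (A.D w) v))
      = ∑ k ∈ Finset.range N,
        A.D ((((-1 : ℂ) ^ (n + k)) / (Nat.factorial k : ℂ)) • ((A.D ^ k) (A.mul (n + k) w v))) := by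
    rw [← Finset.sum_add_distrib]
    refine Finset.sum_congr rfl (fun k _ => ?_)
    rw [← smul_add, ← map_add, map_smul]
    congr 1
    have : A.mul (n + k) w (A.D v) + A.mul (n + k) (A.D w) v = A.D (A.mul (n + k) w v) := by
      rw [A.leibniz]; abel
    rw [this]
    rw [show A.D ((A.D ^ k) (A.mul (n + k) w v)) = (A.D ^ (k + 1)) (A.mul (n + k) w v) from by
      rw [pow_succ']; rfl]
    rw [show (A.D ^ k) (A.D (A.mul (n + k) w v)) = (A.D ^ (k + 1)) (A.mul (n + k) w v) from by
      rw [pow_succ]; rfl]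
  rw [← hsum]
  abel

end VLAJSS
namespace VLASS

variable (A : VLASS U)

lemma jacobi_fin (k m n : ℕ) (u v w : U) :
    ∑ i ∈ Finset.range (k + 1), ((-1 : ℂ) ^ i * (Nat.choose k i : ℂ)) •
        (A.mul (m + k - i) u (A.mul (n + i) v w)
          - ((-1 : ℂ) ^ k) • A.mul (n + k - i) v (A.mul (m + i) u w))
      = ∑ i ∈ Finset.range (m + 1),
          ((Nat.choose m i : ℂ)) • A.mul (m + n - i) (A.mul (k + i) u v) w := by
  have h := A.jacobi k m n u v w
  rwa [finsum_eq_range _ (k + 1) (fun i hi => by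
      rw [Nat.choose_eq_zero_of_lt (by omega)]; simp),
    finsum_eq_range _ (m + 1) (fun i hi => by
      rw [Nat.choose_eq_zero_of_lt (by omega)]; simp)] at h

lemma coeff_id (n l j m : ℕ) :
    (-1 : ℂ) ^ (n + (l + j)) / (Nat.factorial (l + j) : ℂ)
        * ((Nat.choose (l + j) j : ℂ) * (Nat.descFactorial m j : ℂ))
      = ((-1 : ℂ) ^ (n + l) / (Nat.factorial l : ℂ))
        * ((-1 : ℂ) ^ j * (Nat.choose m j : ℂ)) := by
  have h1 : (Nat.descFactorial m j : ℂ)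
      = (Nat.factorial j : ℂ) * (Nat.choose m j : ℂ) := by
    exact_mod_cast congrArg (Nat.cast : ℕ → ℂ) (Nat.descFactorial_eq_factorial_mul_choose m j)
  have h2 : ((l + j).choose j : ℂ) * (Nat.factorial j : ℂ) * (Nat.factorial l : ℂ)
      = (Nat.factorial (l + j) : ℂ) := by
    have := Nat.choose_mul_factorial_mul_factorial (Nat.le_add_left j l)
    rw [Nat.add_sub_cancel] at this
    exact_mod_cast congrArg (Nat.cast : ℕ → ℂ) this
  have hp : (-1 : ℂ) ^ (n + (l + j)) = (-1 : ℂ) ^ (n + l) * (-1 : ℂ) ^ j := by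
    rw [← pow_add]; congr 1; omega
  have hlj : (Nat.factorial (l + j) : ℂ) ≠ 0 := by
    exact_mod_cast (Nat.factorial_ne_zero (l + j))
  have hl : (Nat.factorial l : ℂ) ≠ 0 := by
    exact_mod_cast (Nat.factorial_ne_zero l)
  rw [h1, hp]
  field_simp
  linear_combination (Nat.choose m j : ℂ) * h2

lemma X_mul_left (m n : ℕ) (u v w : U) :
    A.mul m u (A.toVLAJSS.X n v w)
      = A.toVLAJSS.X n v (A.mul m u w)
        + ∑ i ∈ Finset.range (m + 1), (Nat.choose m i : ℂ) •
            A.toVLAJSS.X (n + m - i) (A.mul i u v) w := by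
  classical
  obtain ⟨N₁, h₁⟩ := A.trunc w v
  obtain ⟨N₂, h₂⟩ := A.trunc (A.mul m u w) v
  choose f hf using fun i => A.trunc w (A.mul i u v)
  set N := max (max N₁ N₂) (max ((Finset.range (m + 1)).sup f) (m + 1)) with hNdef
  have hwv : ∀ j, N ≤ j → A.mul j w v = 0 := fun j hj => h₁ j (by omega)
  have huwv : ∀ j, N ≤ j → A.mul j (A.mul m u w) v = 0 := fun j hj => h₂ j (by omega)
  have hwi : ∀ i, i ≤ m → ∀ j, N ≤ j → A.mul j w (A.mul i u v) = 0 := by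
    intro i hi j hj
    refine hf i j ?_
    have : f i ≤ (Finset.range (m + 1)).sup f :=
      Finset.le_sup (Finset.mem_range.mpr (by omega))
    omega
  have hNm : m + 1 ≤ N := by omega
  -- the double-sum summand
  set F : ℕ → ℕ → U := fun k j =>
    ((-1 : ℂ) ^ (n + k) / (Nat.factorial k : ℂ)
        * ((Nat.choose k j : ℂ) * (Nat.descFactorial m j : ℂ))) •
      ((A.D ^ (k - j)) (A.mul (m - j) u (A.mul (n + k) w v))) with hF
  -- the inner Jacobi input
  set In : ℕ → U := fun l => ∑ j ∈ Finset.range (m + 1),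
      ((-1 : ℂ) ^ j * (Nat.choose m j : ℂ)) • A.mul (m - j) u (A.mul (n + l + j) w v) with hIn
  -- Step 1 : expand
  have step1 : A.mul m u (A.toVLAJSS.X n v w)
      = A.mul m u (A.mul n v w)
        + ∑ k ∈ Finset.range N, ∑ j ∈ Finset.range (k + 1), F k j := by
    unfold VLAJSS.X
    rw [A.toVLAJSS.S_eq_range n v w N hwv, map_add, map_sum]
    congr 1
    refine Finset.sum_congr rfl (fun k _ => ?_)
    rw [map_smul, A.toVLAJSS.mul_pow_D, Finset.smul_sum]
    refine Finset.sum_congr rfl (fun j _ => ?_)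
    rw [smul_smul, hF]
  -- Step 2 : the first term via Jacobi (k = 0)
  have step2 : A.mul m u (A.mul n v w)
      = A.mul n v (A.mul m u w)
        + ∑ i ∈ Finset.range (m + 1),
            (Nat.choose m i : ℂ) • A.mul (n + m - i) (A.mul i u v) w := by
    have J := A.jacobi_fin 0 m n u v w
    simp only [Finset.sum_range_one, Nat.choose_zero_right, Nat.cast_one, pow_zero, one_mul,
      one_smul, Nat.add_zero, Nat.zero_add, Nat.add_sub_cancel, Nat.sub_zero] at J
    rw [sub_eq_iff_eq_add] at J
    rw [J]
    rw [add_comm]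
    congr 1
    refine Finset.sum_congr rfl (fun i _ => ?_)
    rw [show m + n - i = n + m - i by omega]
  -- Step 3 : massage the double sum
  have hT : ∑ k ∈ Finset.range N, ∑ j ∈ Finset.range (k + 1), F k j
      = ∑ l ∈ Finset.range N,
          ((-1 : ℂ) ^ (n + l) / (Nat.factorial l : ℂ)) • ((A.D ^ l) (In l)) := by
    have t2 : ∑ k ∈ Finset.range N, ∑ j ∈ Finset.range (k + 1), F k j
        = ∑ k ∈ Finset.range N, ∑ j ∈ Finset.range N, F k j := by
      refine Finset.sum_congr rfl (fun k hk => ?_)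
      rw [Finset.mem_range] at hk
      refine Finset.sum_subset (by intro x hx; rw [Finset.mem_range] at *; omega) ?_
      intro j _ hj
      rw [Finset.mem_range] at hj
      rw [hF]
      simp only []
      rw [Nat.choose_eq_zero_of_lt (by omega)]
      simp
    have t4 : ∀ j ∈ Finset.range N,
        ∑ k ∈ Finset.range N, F k j = ∑ l ∈ Finset.range N, F (l + j) j := by
      intro j _
      refine sum_shift _ N j (fun k hk => ?_) (fun k hk => ?_)
      · rw [hF]; simp only []
        rw [Nat.choose_eq_zero_of_lt (by omega)]; simp
      · rw [hF]; simp only []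
        rw [hwv (n + k) (by omega)]; simp
    have t6 : ∀ l ∈ Finset.range N,
        ∑ j ∈ Finset.range N, F (l + j) j = ∑ j ∈ Finset.range (m + 1), F (l + j) j := by
      intro l _
      refine (Finset.sum_subset (by intro x hx; rw [Finset.mem_range] at *; omega) ?_).symm
      intro j _ hj
      rw [Finset.mem_range] at hj
      rw [hF]; simp only []
      rw [Nat.descFactorial_eq_zero_iff_lt.mpr (by omega)]
      simp
    have t7 : ∀ l ∈ Finset.range N,
        ∑ j ∈ Finset.range (m + 1), F (l + j) j
          = ((-1 : ℂ) ^ (n + l) / (Nat.factorial l : ℂ)) • ((A.D ^ l) (In l)) := by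
      intro l _
      rw [hIn]; simp only []
      rw [map_sum, Finset.smul_sum]
      refine Finset.sum_congr rfl (fun j _ => ?_)
      rw [hF]; simp only []
      rw [map_smul, smul_smul, Nat.add_sub_cancel, coeff_id,
        show n + (l + j) = n + l + j by omega]
    rw [t2, Finset.sum_comm, Finset.sum_congr rfl t4, Finset.sum_comm,
      Finset.sum_congr rfl t6, Finset.sum_congr rfl t7]
  -- Step 4 : inner Jacobi (second Jacobi application)
  have hInner : ∀ l : ℕ, In l
      = A.mul (n + l) (A.mul m u w) v
        + ((-1 : ℂ) ^ m) • ∑ i ∈ Finset.range (m + 1),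
            ((-1 : ℂ) ^ i * (Nat.choose m i : ℂ)) • A.mul (n + l + m - i) w (A.mul i u v) := by
    intro l
    have J := A.jacobi_fin m 0 (n + l) u w v
    simp only [Finset.sum_range_one, Nat.choose_zero_right, Nat.cast_one, one_smul,
      Nat.zero_add, Nat.add_zero, Nat.sub_zero] at J
    rw [hIn]; simp only []
    have expand : ∑ i ∈ Finset.range (m + 1), ((-1 : ℂ) ^ i * (Nat.choose m i : ℂ)) •
          (A.mul (m - i) u (A.mul (n + l + i) w v)
            - ((-1 : ℂ) ^ m) • A.mul (n + l + m - i) w (A.mul i u v))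
        = ∑ i ∈ Finset.range (m + 1), ((-1 : ℂ) ^ i * (Nat.choose m i : ℂ)) •
            A.mul (m - i) u (A.mul (n + l + i) w v)
          - ((-1 : ℂ) ^ m) • ∑ i ∈ Finset.range (m + 1),
            ((-1 : ℂ) ^ i * (Nat.choose m i : ℂ)) • A.mul (n + l + m - i) w (A.mul i u v) := by
      rw [Finset.smul_sum, ← Finset.sum_sub_distrib]
      refine Finset.sum_congr rfl (fun i _ => ?_)
      rw [smul_sub]
      congr 1
      rw [smul_comm]
    rw [expand] at J
    rw [sub_eq_iff_eq_add] at J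
    rw [J, add_comm]
  -- Step 5 : sum over l of the two inner pieces
  have step5 : ∑ l ∈ Finset.range N,
        ((-1 : ℂ) ^ (n + l) / (Nat.factorial l : ℂ)) • ((A.D ^ l) (In l))
      = A.toVLAJSS.S n v (A.mul m u w)
        + ∑ i ∈ Finset.range (m + 1),
            (Nat.choose m i : ℂ) • A.toVLAJSS.S (n + m - i) (A.mul i u v) w := by
    have split : ∀ l ∈ Finset.range N,
        ((-1 : ℂ) ^ (n + l) / (Nat.factorial l : ℂ)) • ((A.D ^ l) (In l))
          = ((-1 : ℂ) ^ (n + l) / (Nat.factorial l : ℂ)) •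
              ((A.D ^ l) (A.mul (n + l) (A.mul m u w) v))
            + ∑ i ∈ Finset.range (m + 1),
                ((-1 : ℂ) ^ (n + l) / (Nat.factorial l : ℂ) * ((-1 : ℂ) ^ m)
                    * ((-1 : ℂ) ^ i * (Nat.choose m i : ℂ))) •
                  ((A.D ^ l) (A.mul (n + l + m - i) w (A.mul i u v))) := by
      intro l _
      rw [hInner l, map_add, smul_add]
      congr 1
      rw [map_smul, map_sum, Finset.smul_sum, Finset.smul_sum]
      refine Finset.sum_congr rfl (fun i _ => ?_)
      rw [map_smul, smul_smul, smul_smul, mul_assoc]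
    rw [Finset.sum_congr rfl split, Finset.sum_add_distrib]
    congr 1
    · rw [A.toVLAJSS.S_eq_range n v (A.mul m u w) N huwv]
    · rw [Finset.sum_comm]
      refine Finset.sum_congr rfl (fun i hi => ?_)
      rw [Finset.mem_range] at hi
      rw [A.toVLAJSS.S_eq_range (n + m - i) (A.mul i u v) w N (hwi i (by omega)),
        Finset.smul_sum]
      refine Finset.sum_congr rfl (fun l _ => ?_)
      rw [smul_smul, show n + l + m - i = n + m - i + l by omega]
      congr 1
      rw [show ((-1 : ℂ) ^ (n + m - i + l) : ℂ) = (-1 : ℂ) ^ (n + l) * (-1 : ℂ) ^ m * (-1 : ℂ) ^ i by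
        rw [← pow_add, ← pow_add]
        exact (neg_one_pow_congr' (by omega)).symm]
      ring
  -- Assemble
  rw [step1, step2, hT, step5]
  unfold VLAJSS.X
  have final : ∑ i ∈ Finset.range (m + 1), (Nat.choose m i : ℂ) •
        (A.mul (n + m - i) (A.mul i u v) w + A.toVLAJSS.S (n + m - i) (A.mul i u v) w)
      = ∑ i ∈ Finset.range (m + 1),
          (Nat.choose m i : ℂ) • A.mul (n + m - i) (A.mul i u v) w
        + ∑ i ∈ Finset.range (m + 1),
          (Nat.choose m i : ℂ) • A.toVLAJSS.S (n + m - i) (A.mul i u v) w := by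
    rw [← Finset.sum_add_distrib]
    exact Finset.sum_congr rfl (fun i _ => smul_add _ _ _)
  rw [final]
  abel

end VLASS
namespace VLASS

/-- The span of the skew defects. -/
noncomputable def W1 (A : VLASS U) : Submodule ℂ U :=
  Submodule.span ℂ (SkewDefects A.toVLAJSS)

variable (A : VLASS U)

lemma X_mem_W1 (n : ℕ) (v w : U) : A.toVLAJSS.X n v w ∈ A.W1 :=
  Submodule.subset_span (A.toVLAJSS.X_mem n v w)

lemma D_mem_W1 : ∀ a ∈ A.W1, A.D a ∈ A.W1 := by
  have h : A.W1 ≤ A.W1.comap A.D := by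
    rw [W1, Submodule.span_le]
    rintro x ⟨v, w, n, rfl⟩
    show A.D (A.toVLAJSS.X n v w) ∈ A.W1
    rw [A.toVLAJSS.X_D]
    exact add_mem (A.X_mem_W1 n (A.D v) w) (A.X_mem_W1 n v (A.D w))
  exact fun a ha => h ha

lemma pow_D_mem_W1 (k : ℕ) : ∀ a ∈ A.W1, (A.D ^ k) a ∈ A.W1 := by
  induction k with
  | zero => intro a ha; simpa using ha
  | succ k ih =>
    intro a ha
    rw [pow_succ']
    exact A.D_mem_W1 _ (ih a ha)

lemma mul_left_mem_W1 (n : ℕ) (u : U) : ∀ a ∈ A.W1, A.mul n u a ∈ A.W1 := by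
  have h : A.W1 ≤ A.W1.comap (A.mul n u) := by
    rw [W1, Submodule.span_le]
    rintro x ⟨v, w, n', rfl⟩
    show A.mul n u (A.toVLAJSS.X n' v w) ∈ A.W1
    rw [A.X_mul_left]
    exact add_mem (A.X_mem_W1 n' v (A.mul n u w))
      (Submodule.sum_mem _ (fun i _ =>
        Submodule.smul_mem _ _ (A.X_mem_W1 (n' + n - i) (A.mul i u v) w)))
  exact fun a ha => h ha

lemma mul_right_mem_W1 (n : ℕ) (u : U) : ∀ a ∈ A.W1, A.mul n a u ∈ A.W1 := by
  intro a ha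
  have hdecomp : A.mul n a u = A.toVLAJSS.X n a u - A.toVLAJSS.S n a u := by
    rw [VLAJSS.X]; abel
  rw [hdecomp]
  refine sub_mem (A.X_mem_W1 n a u) ?_
  obtain ⟨N, hN⟩ := A.trunc u a
  rw [A.toVLAJSS.S_eq_range n a u N (fun j hj => hN j hj)]
  refine Submodule.sum_mem _ (fun k _ => Submodule.smul_mem _ _ ?_)
  exact A.pow_D_mem_W1 k _ (A.mul_left_mem_W1 (n + k) u a ha)

/-- Quotient operator. -/
noncomputable def DQ : (U ⧸ A.W1) →ₗ[ℂ] (U ⧸ A.W1) :=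
  Submodule.mapQ A.W1 A.W1 A.D (fun a ha => A.D_mem_W1 a ha)

/-- Quotient products. -/
noncomputable def mulQ (n : ℕ) : (U ⧸ A.W1) →ₗ[ℂ] (U ⧸ A.W1) →ₗ[ℂ] (U ⧸ A.W1) :=
  Submodule.liftQ A.W1
    { toFun := fun u => Submodule.mapQ A.W1 A.W1 (A.mul n u)
        (fun a ha => A.mul_left_mem_W1 n u a ha)
      map_add' := fun u u' => by
        refine Submodule.linearMap_qext _ ?_
        ext x
        simp [Submodule.mapQ_apply]
      map_smul' := fun c u => by
        refine Submodule.linearMap_qext _ ?_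
        ext x
        simp [Submodule.mapQ_apply] }
    (by
      intro a ha
      refine Submodule.linearMap_qext _ ?_
      ext x
      simp only [LinearMap.coe_comp, Function.comp_apply, Submodule.mkQ_apply,
        LinearMap.coe_mk, AddHom.coe_mk, Submodule.mapQ_apply, LinearMap.zero_comp,
        LinearMap.zero_apply]
      rw [Submodule.Quotient.mk_eq_zero]
      exact A.mul_right_mem_W1 n x a ha)

@[simp] lemma DQ_mk (u : U) : A.DQ (A.W1.mkQ u) = A.W1.mkQ (A.D u) := by
  simp [DQ, Submodule.mkQ_apply, Submodule.mapQ_apply]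

@[simp] lemma mulQ_mk (n : ℕ) (u v : U) :
    A.mulQ n (A.W1.mkQ u) (A.W1.mkQ v) = A.W1.mkQ (A.mul n u v) := by
  rfl

@[simp] lemma DQ_mk' (u : U) :
    A.DQ (Submodule.Quotient.mk u : U ⧸ A.W1) = Submodule.Quotient.mk (A.D u) := by
  simpa [Submodule.mkQ_apply] using A.DQ_mk u

@[simp] lemma mulQ_mk' (n : ℕ) (u v : U) :
    A.mulQ n (Submodule.Quotient.mk u : U ⧸ A.W1) (Submodule.Quotient.mk v)
      = Submodule.Quotient.mk (A.mul n u v) := by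
  simpa [Submodule.mkQ_apply] using A.mulQ_mk n u v

lemma DQ_pow_mk (k : ℕ) (u : U) : (A.DQ ^ k) (A.W1.mkQ u) = A.W1.mkQ ((A.D ^ k) u) := by
  induction k generalizing u with
  | zero => simp
  | succ k ih =>
    rw [pow_succ, pow_succ]
    show (A.DQ ^ k) (A.DQ (A.W1.mkQ u)) = A.W1.mkQ ((A.D ^ k) (A.D u))
    rw [A.DQ_mk, ih]

end VLASS
/-- for a VLA-SS `W`, the span `W₁` of the skew defect vectors is a
two-sided `D`-invariant ideal; the quotient `W_ss = W/W₁`, with the induced `D` and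
products, is a vertex Lie algebra; and every homomorphism from `W` to a vertex Lie
algebra vanishes on `W₁`, hence factors through `W_ss`. -/
theorem stmt12 (A : VLASS U) :
    (∀ a ∈ Submodule.span ℂ (SkewDefects A.toVLAJSS),
      A.D a ∈ Submodule.span ℂ (SkewDefects A.toVLAJSS)) ∧
    (∀ (n : ℕ) (u : U), ∀ a ∈ Submodule.span ℂ (SkewDefects A.toVLAJSS),
      A.mul n u a ∈ Submodule.span ℂ (SkewDefects A.toVLAJSS) ∧
      A.mul n a u ∈ Submodule.span ℂ (SkewDefects A.toVLAJSS)) ∧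
    (∀ W₁ : Submodule ℂ U, W₁ = Submodule.span ℂ (SkewDefects A.toVLAJSS) →
      ∃ (DQ : (U ⧸ W₁) →ₗ[ℂ] (U ⧸ W₁))
        (mulQ : ℕ → (U ⧸ W₁) →ₗ[ℂ] (U ⧸ W₁) →ₗ[ℂ] (U ⧸ W₁)),
        (∀ u : U, DQ (W₁.mkQ u) = W₁.mkQ (A.D u)) ∧
        (∀ (n : ℕ) (u v : U), mulQ n (W₁.mkQ u) (W₁.mkQ v) = W₁.mkQ (A.mul n u v)) ∧
        -- the quotient is a vertex Lie algebra:
        (∀ x y : U ⧸ W₁, ∃ N : ℕ, ∀ n : ℕ, N ≤ n → mulQ n x y = 0) ∧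
        (∀ (n : ℕ) (x y : U ⧸ W₁), mulQ (n + 1) (DQ x) y = (-((n : ℂ) + 1)) • mulQ n x y) ∧
        (∀ x y : U ⧸ W₁, mulQ 0 (DQ x) y = 0) ∧
        (∀ (n : ℕ) (x y : U ⧸ W₁), DQ (mulQ n x y) = mulQ n (DQ x) y + mulQ n x (DQ y)) ∧
        (∀ (n : ℕ) (x y : U ⧸ W₁),
          mulQ n x y =
            -∑ᶠ k : ℕ, (((-1 : ℂ) ^ (n + k)) / (Nat.factorial k : ℂ)) •
              ((DQ ^ k) (mulQ (n + k) y x))) ∧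
        (∀ (k m n : ℕ) (x y z : U ⧸ W₁),
          ∑ᶠ i : ℕ, ((-1 : ℂ) ^ i * (Nat.choose k i : ℂ)) •
              (mulQ (m + k - i) x (mulQ (n + i) y z)
                - ((-1 : ℂ) ^ k) • mulQ (n + k - i) y (mulQ (m + i) x z))
            = ∑ᶠ i : ℕ, ((Nat.choose m i : ℂ)) • mulQ (m + n - i) (mulQ (k + i) x y) z) ∧
        -- universal property:
        (∀ (V : Type*) (_ : AddCommGroup V), ∀ (_ : Module ℂ V) (B : VertexLie V)
            (φ : U →ₗ[ℂ] V),
          (∀ (n : ℕ) (u v : U), φ (A.mul n u v) = B.mul n (φ u) (φ v)) →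
          (∀ u : U, φ (A.D u) = B.D (φ u)) →
          (∀ a ∈ W₁, φ a = 0) ∧
          ∃ ψ : (U ⧸ W₁) →ₗ[ℂ] V,
            (∀ u : U, ψ (W₁.mkQ u) = φ u) ∧
            (∀ (n : ℕ) (x y : U ⧸ W₁), ψ (mulQ n x y) = B.mul n (ψ x) (ψ y)) ∧
            (∀ x : U ⧸ W₁, ψ (DQ x) = B.D (ψ x)))) := by
  refine ⟨fun a ha => A.D_mem_W1 a ha,
    fun n u a ha => ⟨A.mul_left_mem_W1 n u a ha, A.mul_right_mem_W1 n u a ha⟩, ?_⟩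
  intro W₁ hW₁
  have hW : W₁ = A.W1 := hW₁
  subst hW
  refine ⟨A.DQ, A.mulQ, fun u => A.DQ_mk u, fun n u v => A.mulQ_mk n u v,
    ?_, ?_, ?_, ?_, ?_, ?_, ?_⟩
  · -- trunc
    intro x y
    obtain ⟨u, rfl⟩ := A.W1.mkQ_surjective x
    obtain ⟨v, rfl⟩ := A.W1.mkQ_surjective y
    obtain ⟨N, hN⟩ := A.trunc u v
    exact ⟨N, fun n hn => by rw [A.mulQ_mk, hN n hn, map_zero]⟩
  · -- dLeft
    intro n x y
    obtain ⟨u, rfl⟩ := A.W1.mkQ_surjective x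
    obtain ⟨v, rfl⟩ := A.W1.mkQ_surjective y
    simp [A.dLeft]
  · -- dLeftZero
    intro x y
    obtain ⟨u, rfl⟩ := A.W1.mkQ_surjective x
    obtain ⟨v, rfl⟩ := A.W1.mkQ_surjective y
    simp [A.dLeftZero]
  · -- leibniz
    intro n x y
    obtain ⟨u, rfl⟩ := A.W1.mkQ_surjective x
    obtain ⟨v, rfl⟩ := A.W1.mkQ_surjective y
    simp [A.leibniz]
  · -- skew
    intro n x y
    obtain ⟨u, rfl⟩ := A.W1.mkQ_surjective x
    obtain ⟨v, rfl⟩ := A.W1.mkQ_surjective y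
    obtain ⟨N, hN⟩ := A.trunc v u
    rw [finsum_eq_range _ N (fun k hk => by
      rw [A.mulQ_mk, hN (n + k) (by omega), map_zero, map_zero, smul_zero])]
    have hterm : ∀ k ∈ Finset.range N,
        (((-1 : ℂ) ^ (n + k)) / (Nat.factorial k : ℂ)) •
            ((A.DQ ^ k) (A.mulQ (n + k) (A.W1.mkQ v) (A.W1.mkQ u)))
          = A.W1.mkQ ((((-1 : ℂ) ^ (n + k)) / (Nat.factorial k : ℂ)) •
              ((A.D ^ k) (A.mul (n + k) v u))) := by
      intro k _
      rw [A.mulQ_mk, A.DQ_pow_mk, map_smul]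
    rw [Finset.sum_congr rfl hterm, ← map_sum, A.mulQ_mk,
      ← A.toVLAJSS.S_eq_range n u v N hN]
    have hX0 : A.W1.mkQ (A.mul n u v) + A.W1.mkQ (A.toVLAJSS.S n u v) = 0 := by
      rw [← map_add]
      rw [Submodule.mkQ_apply, Submodule.Quotient.mk_eq_zero]
      exact A.X_mem_W1 n u v
    exact eq_neg_of_add_eq_zero_left hX0
  · -- jacobi
    intro k m n x y z
    obtain ⟨u, rfl⟩ := A.W1.mkQ_surjective x
    obtain ⟨v, rfl⟩ := A.W1.mkQ_surjective y
    obtain ⟨w, rfl⟩ := A.W1.mkQ_surjective z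
    have J := A.jacobi_fin k m n u v w
    rw [finsum_eq_range _ (k + 1) (fun i hi => by
        rw [Nat.choose_eq_zero_of_lt (by omega)]; simp),
      finsum_eq_range _ (m + 1) (fun i hi => by
        rw [Nat.choose_eq_zero_of_lt (by omega)]; simp)]
    have hL : ∀ i ∈ Finset.range (k + 1),
        ((-1 : ℂ) ^ i * (Nat.choose k i : ℂ)) •
            (A.mulQ (m + k - i) (A.W1.mkQ u) (A.mulQ (n + i) (A.W1.mkQ v) (A.W1.mkQ w))
              - ((-1 : ℂ) ^ k) • A.mulQ (n + k - i) (A.W1.mkQ v)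
                  (A.mulQ (m + i) (A.W1.mkQ u) (A.W1.mkQ w)))
          = A.W1.mkQ (((-1 : ℂ) ^ i * (Nat.choose k i : ℂ)) •
              (A.mul (m + k - i) u (A.mul (n + i) v w)
                - ((-1 : ℂ) ^ k) • A.mul (n + k - i) v (A.mul (m + i) u w))) := by
      intro i _
      rw [A.mulQ_mk, A.mulQ_mk, A.mulQ_mk, A.mulQ_mk, ← map_smul, ← map_sub, ← map_smul]
    have hR : ∀ i ∈ Finset.range (m + 1),
        ((Nat.choose m i : ℂ)) •
            A.mulQ (m + n - i) (A.mulQ (k + i) (A.W1.mkQ u) (A.W1.mkQ v)) (A.W1.mkQ w)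
          = A.W1.mkQ (((Nat.choose m i : ℂ)) • A.mul (m + n - i) (A.mul (k + i) u v) w) := by
      intro i _
      rw [A.mulQ_mk, A.mulQ_mk, ← map_smul]
    rw [Finset.sum_congr rfl hL, Finset.sum_congr rfl hR, ← map_sum, ← map_sum, J]
  · -- universal property
    intro V i1 i2 B φ hφmul hφD
    letI := i1
    letI := i2
    have hpow : ∀ (k : ℕ) (a : U), φ ((A.D ^ k) a) = (B.D ^ k) (φ a) := by
      intro k
      induction k with
      | zero => intro a; simp
      | succ k ih =>
        intro a
        rw [pow_succ, pow_succ]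
        show φ ((A.D ^ k) (A.D a)) = (B.D ^ k) (B.D (φ a))
        rw [← hφD, ih]
    have hle : A.W1 ≤ LinearMap.ker φ := by
      rw [VLASS.W1, Submodule.span_le]
      rintro x ⟨v, w, n, rfl⟩
      simp only [SetLike.mem_coe, LinearMap.mem_ker]
      obtain ⟨N, hN⟩ := A.trunc w v
      have hNB : ∀ j, N ≤ j → B.mul j (φ w) (φ v) = 0 := fun j hj => by
        rw [← hφmul, hN j hj, map_zero]
      have hskew := B.skew n (φ v) (φ w)
      rw [finsum_eq_range _ N (fun kk hk => by
        rw [hNB (n + kk) (by omega), map_zero, smul_zero])] at hskew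
      show φ (A.mul n v w + A.toVLAJSS.S n v w) = 0
      rw [map_add, hφmul, A.toVLAJSS.S_eq_range n v w N hN, map_sum]
      have hterm : ∀ kk ∈ Finset.range N,
          φ ((((-1 : ℂ) ^ (n + kk)) / (Nat.factorial kk : ℂ)) •
              ((A.D ^ kk) (A.mul (n + kk) w v)))
            = (((-1 : ℂ) ^ (n + kk)) / (Nat.factorial kk : ℂ)) •
              ((B.D ^ kk) (B.mul (n + kk) (φ w) (φ v))) := by
        intro kk _
        rw [map_smul, hpow, hφmul]
      rw [Finset.sum_congr rfl hterm, hskew]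
      simp
    have hvan : ∀ a ∈ A.W1, φ a = 0 := fun a ha => hle ha
    refine ⟨hvan, A.W1.liftQ φ hle, fun u => ?_, ?_, ?_⟩
    · simp [Submodule.liftQ_apply, Submodule.mkQ_apply]
    · intro n x y
      obtain ⟨u, rfl⟩ := A.W1.mkQ_surjective x
      obtain ⟨v, rfl⟩ := A.W1.mkQ_surjective y
      rw [A.mulQ_mk]
      simp only [Submodule.mkQ_apply, Submodule.liftQ_apply]
      exact hφmul n u v
    · intro x
      obtain ⟨u, rfl⟩ := A.W1.mkQ_surjective x
      rw [A.DQ_mk]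
      simp only [Submodule.mkQ_apply, Submodule.liftQ_apply]
      exact hφD u

end
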